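/- Let q ∈ ℂ, q ≠ 0 and not a root of unity. On the algebra R = ℂ[t, Q, Q^{−1}] with relation Qt = qtQ, define a ℂ-algebra endomorphism σ by σ(t) = qt, σ(Q) = qQ, and a σ-twisted derivation θ (satisfying θ(ab) = θ(a)b + σ(a)θ(b)) by θ(t) = 1, θ(Q) = 0. Then the only two-sided ideals I of R satisfying σ(I) ⊆ I and θ(I) ⊆ I are 0 and R. -/

import Mathlib

/-- Generators of the algebra `R = ℂ⟨t, Q, Q⁻¹⟩`. -/
inductive Rgen | t | Q | Qinv

open FreeAlgebra in
/-- Defining relations of `R`: `Q·t = q·t·Q` and `Q·Q⁻¹ = Q⁻¹·Q = 1`. -/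
inductive Rrel (q : ℂ) : FreeAlgebra ℂ Rgen → FreeAlgebra ℂ Rgen → Prop
  | comm : Rrel q (ι ℂ Rgen.Q * ι ℂ Rgen.t) (q • (ι ℂ Rgen.t * ι ℂ Rgen.Q))
  | inv_right : Rrel q (ι ℂ Rgen.Q * ι ℂ Rgen.Qinv) 1
  | inv_left : Rrel q (ι ℂ Rgen.Qinv * ι ℂ Rgen.Q) 1

/-- The ℂ-algebra `R = ℂ[t, Q, Q⁻¹]` with relation `Qt = qtQ`. -/
abbrev Ralg (q : ℂ) : Type := RingQuot (Rrel q)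

noncomputable def Ralg.t (q : ℂ) : Ralg q :=
  RingQuot.mkAlgHom ℂ (Rrel q) (FreeAlgebra.ι ℂ Rgen.t)
noncomputable def Ralg.Q (q : ℂ) : Ralg q :=
  RingQuot.mkAlgHom ℂ (Rrel q) (FreeAlgebra.ι ℂ Rgen.Q)
noncomputable def Ralg.Qinv (q : ℂ) : Ralg q :=
  RingQuot.mkAlgHom ℂ (Rrel q) (FreeAlgebra.ι ℂ Rgen.Qinv)

namespace QsiAux

variable (q : ℂ)

lemma QQi : Ralg.Q q * Ralg.Qinv q = 1 := by
  rw [Ralg.Q, Ralg.Qinv, ← map_mul]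
  exact (RingQuot.mkAlgHom_rel ℂ Rrel.inv_right).trans (map_one _)

lemma QiQ : Ralg.Qinv q * Ralg.Q q = 1 := by
  rw [Ralg.Q, Ralg.Qinv, ← map_mul]
  exact (RingQuot.mkAlgHom_rel ℂ Rrel.inv_left).trans (map_one _)

lemma Qt : Ralg.Q q * Ralg.t q = q • (Ralg.t q * Ralg.Q q) := by
  rw [Ralg.Q, Ralg.t, ← map_mul]
  refine (RingQuot.mkAlgHom_rel ℂ Rrel.comm).trans ?_
  rw [map_smul, map_mul]

/-- `Q` as a unit. -/
noncomputable def uQ : (Ralg q)ˣ := ⟨Ralg.Q q, Ralg.Qinv q, QQi q, QiQ q⟩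

/-- `Q ^ n` for `n : ℤ`. -/
noncomputable def zc (n : ℤ) : Ralg q := ((uQ q ^ n : (Ralg q)ˣ) : Ralg q)

lemma zc_zero : zc q 0 = 1 := by simp [zc]

lemma zc_one : zc q 1 = Ralg.Q q := by simp [zc]; rfl

lemma zc_negone : zc q (-1) = Ralg.Qinv q := by simp [zc]; rfl

lemma zc_add (a b : ℤ) : zc q (a + b) = zc q a * zc q b := by
  rw [zc, zc, zc, zpow_add, Units.val_mul]

lemma zc_t (hq0 : q ≠ 0) (a : ℤ) :
    zc q a * Ralg.t q = (q ^ a) • (Ralg.t q * zc q a) := by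
  induction a using Int.induction_on with
  | zero => simp [zc_zero]
  | succ k ih =>
    have h1 : zc q (k + 1) = zc q k * Ralg.Q q := by rw [zc_add, zc_one]
    rw [h1, mul_assoc, Qt, mul_smul_comm, ← mul_assoc, ih, zpow_add₀ hq0, zpow_one,
      smul_mul_assoc, smul_smul, mul_comm (q ^ (k:ℤ)) q]
    congr 1
    rw [mul_assoc]
  | pred k ih =>
    have h1 : zc q (-(k:ℤ) - 1) = zc q (-k) * Ralg.Qinv q := by
      rw [← zc_negone, ← zc_add]; ring_nf
    have hQit : Ralg.Qinv q * Ralg.t q = q⁻¹ • (Ralg.t q * Ralg.Qinv q) := by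
      have h2 : Ralg.Qinv q * (Ralg.Q q * Ralg.t q) * Ralg.Qinv q
          = Ralg.Qinv q * (q • (Ralg.t q * Ralg.Q q)) * Ralg.Qinv q := by rw [Qt]
      rw [← mul_assoc, QiQ, one_mul] at h2
      have h3 : Ralg.t q * Ralg.Qinv q = q • (Ralg.Qinv q * Ralg.t q) := by
        rw [h2]; rw [mul_smul_comm, smul_mul_assoc]
        congr 1
        rw [mul_assoc, mul_assoc, QQi, mul_one]
      rw [h3, smul_smul, inv_mul_cancel₀ hq0, one_smul]
    rw [h1, mul_assoc, hQit, mul_smul_comm, ← mul_assoc, ih, zpow_sub₀ hq0, zpow_one,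
      smul_mul_assoc, smul_smul, div_eq_mul_inv, mul_comm (q ^ (-(k:ℤ)))]
    congr 1
    rw [mul_assoc]

lemma zc_tpow (hq0 : q ≠ 0) (a : ℤ) (k : ℕ) :
    zc q a * (Ralg.t q) ^ k = (q ^ (a * k)) • ((Ralg.t q) ^ k * zc q a) := by
  induction k with
  | zero => simp
  | succ k ih =>
    rw [pow_succ', ← mul_assoc, zc_t q hq0, smul_mul_assoc, mul_assoc, ih,
      mul_smul_comm, smul_smul, ← zpow_add₀ hq0]
    rw [show a + a * (k:ℤ) = a * ((k:ℕ)+1 : ℤ) by ring]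
    rw [← mul_assoc, ← pow_succ']
    norm_num

/-- The monomial `t^m Q^n`. -/
noncomputable def mon (m : ℕ) (n : ℤ) : Ralg q := (Ralg.t q) ^ m * zc q n

lemma mon_mul (hq0 : q ≠ 0) (m k : ℕ) (a b : ℤ) :
    mon q m a * mon q k b = (q ^ (a * k)) • mon q (m + k) (a + b) := by
  rw [mon, mon, mon, mul_assoc, ← mul_assoc (zc q a), zc_tpow q hq0,
    smul_mul_assoc, mul_smul_comm, ← mul_assoc, ← mul_assoc, ← pow_add,
    mul_assoc ((Ralg.t q)^(m+k)), ← zc_add]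


/-- The span of all monomials. -/
noncomputable def monSpan : Submodule ℂ (Ralg q) :=
  Submodule.span ℂ (Set.range (fun p : ℕ × ℤ => mon q p.1 p.2))

lemma mon_mem_span (m : ℕ) (n : ℤ) : mon q m n ∈ monSpan q :=
  Submodule.subset_span ⟨(m, n), rfl⟩

lemma monSpan_mul (hq0 : q ≠ 0) {x y : Ralg q} (hx : x ∈ monSpan q)
    (hy : y ∈ monSpan q) : x * y ∈ monSpan q := by
  induction hx, hy using Submodule.span_induction₂ with
  | mem_mem x y hx hy =>
    obtain ⟨p, rfl⟩ := hx
    obtain ⟨p', rfl⟩ := hy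
    rw [mon_mul q hq0]
    exact Submodule.smul_mem _ _ (mon_mem_span q _ _)
  | zero_left y hy => rw [zero_mul]; exact Submodule.zero_mem _
  | zero_right x hx => rw [mul_zero]; exact Submodule.zero_mem _
  | add_left x y z _ _ _ h1 h2 => rw [add_mul]; exact Submodule.add_mem _ h1 h2
  | add_right x y z _ _ _ h1 h2 => rw [mul_add]; exact Submodule.add_mem _ h1 h2
  | smul_left c x y _ _ h => rw [smul_mul_assoc]; exact Submodule.smul_mem _ _ h
  | smul_right c x y _ _ h => rw [mul_smul_comm]; exact Submodule.smul_mem _ _ h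

lemma monSpan_top (hq0 : q ≠ 0) : monSpan q = ⊤ := by
  rw [eq_top_iff]
  rintro x -
  obtain ⟨a, rfl⟩ := RingQuot.mkAlgHom_surjective ℂ (Rrel q) x
  induction a using FreeAlgebra.induction with
  | grade0 c =>
    rw [AlgHom.commutes]
    have : (algebraMap ℂ (Ralg q)) c = c • mon q 0 0 := by
      rw [Algebra.smul_def, mon, pow_zero, zc_zero, one_mul, mul_one]
    rw [this]
    exact Submodule.smul_mem _ _ (mon_mem_span q 0 0)
  | grade1 g =>
    cases g with
    | t =>
      have : RingQuot.mkAlgHom ℂ (Rrel q) (FreeAlgebra.ι ℂ Rgen.t) = mon q 1 0 := by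
        rw [mon, zc_zero, mul_one, pow_one]; rfl
      rw [this]; exact mon_mem_span q 1 0
    | Q =>
      have : RingQuot.mkAlgHom ℂ (Rrel q) (FreeAlgebra.ι ℂ Rgen.Q) = mon q 0 1 := by
        rw [mon, zc_one, pow_zero, one_mul]; rfl
      rw [this]; exact mon_mem_span q 0 1
    | Qinv =>
      have : RingQuot.mkAlgHom ℂ (Rrel q) (FreeAlgebra.ι ℂ Rgen.Qinv) = mon q 0 (-1) := by
        rw [mon, zc_negone, pow_zero, one_mul]; rfl
      rw [this]; exact mon_mem_span q 0 (-1)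
  | mul a b ha hb => rw [map_mul]; exact monSpan_mul q hq0 ha hb
  | add a b ha hb => rw [map_add]; exact Submodule.add_mem _ ha hb

/-- Conjugation by `Q`, as a linear map. -/
noncomputable def Tconj : Ralg q →ₗ[ℂ] Ralg q where
  toFun x := Ralg.Q q * x * Ralg.Qinv q
  map_add' x y := by simp only [mul_add, add_mul]
  map_smul' c x := by simp only [mul_smul_comm, smul_mul_assoc, RingHom.id_apply]

lemma Tconj_mon (hq0 : q ≠ 0) (m : ℕ) (n : ℤ) :
    Tconj q (mon q m n) = (q ^ (m:ℤ)) • mon q m n := by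
  show Ralg.Q q * mon q m n * Ralg.Qinv q = _
  rw [mon, ← zc_one, ← zc_negone, ← mul_assoc, zc_tpow q hq0,
    smul_mul_assoc, smul_mul_assoc, mul_assoc, mul_assoc, ← zc_add, ← zc_add]
  rw [show (1 : ℤ) * (m:ℤ) = (m:ℤ) by ring, show 1 + (n + -1) = n by ring]

section Sigma
variable (σ : Ralg q →ₐ[ℂ] Ralg q) (hq0 : q ≠ 0)
  (hσt : σ (Ralg.t q) = q • Ralg.t q) (hσQ : σ (Ralg.Q q) = q • Ralg.Q q)

include hq0 hσQ in
lemma σ_Qi : σ (Ralg.Qinv q) = q⁻¹ • Ralg.Qinv q := by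
  have h1 : (q • Ralg.Q q) * σ (Ralg.Qinv q) = 1 := by
    rw [← hσQ, ← map_mul, QQi, map_one]
  have h2 : Ralg.Qinv q * ((q • Ralg.Q q) * σ (Ralg.Qinv q)) = Ralg.Qinv q := by
    rw [h1, mul_one]
  rw [smul_mul_assoc, mul_smul_comm, ← mul_assoc, QiQ, one_mul] at h2
  calc σ (Ralg.Qinv q) = (q⁻¹ * q) • σ (Ralg.Qinv q) := by
        rw [inv_mul_cancel₀ hq0, one_smul]
    _ = q⁻¹ • Ralg.Qinv q := by rw [mul_smul, h2]

include hq0 hσQ in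
lemma σ_zc (n : ℤ) : σ (zc q n) = (q ^ n) • zc q n := by
  induction n using Int.induction_on with
  | zero => rw [zc_zero, map_one, zpow_zero, one_smul]
  | succ k ih =>
    rw [show ((k:ℤ) + 1) = k + 1 from rfl, zc_add, zc_one, map_mul, ih, hσQ,
      smul_mul_assoc, mul_smul_comm, smul_smul, ← zpow_add_one₀ hq0, ← zc_one q, ← zc_add]
  | pred k ih =>
    rw [show (-(k:ℤ) - 1) = -k + -1 from by ring, zc_add, zc_negone, map_mul, ih,
      σ_Qi q σ hq0 hσQ, smul_mul_assoc, mul_smul_comm, smul_smul, ← zpow_sub_one₀ hq0,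
      ← zc_negone q, ← zc_add]
    rw [show -(k:ℤ) + -1 = -(k:ℤ) - 1 by ring]

include hq0 hσt hσQ in
lemma σ_mon (m : ℕ) (n : ℤ) : σ (mon q m n) = (q ^ ((m:ℤ) + n)) • mon q m n := by
  rw [mon, map_mul, map_pow, hσt, σ_zc q σ hq0 hσQ, smul_pow, smul_mul_assoc,
    mul_smul_comm, smul_smul, ← zpow_natCast q m, ← zpow_add₀ hq0]

/-- The operator `x ↦ Q⁻¹ σ(x) Q`, as a linear map. -/
noncomputable def tauMap : Ralg q →ₗ[ℂ] Ralg q where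
  toFun x := Ralg.Qinv q * σ x * Ralg.Q q
  map_add' x y := by simp only [map_add, mul_add, add_mul]
  map_smul' c x := by simp only [map_smul, mul_smul_comm, smul_mul_assoc, RingHom.id_apply]

include hq0 hσt hσQ in
lemma tauMap_mon (m : ℕ) (n : ℤ) :
    tauMap q σ (mon q m n) = (q ^ n) • mon q m n := by
  show Ralg.Qinv q * σ (mon q m n) * Ralg.Q q = _
  rw [σ_mon q σ hq0 hσt hσQ, mul_smul_comm, smul_mul_assoc, mon, ← zc_one, ← zc_negone,
    ← mul_assoc, zc_tpow q hq0, smul_mul_assoc, smul_mul_assoc, mul_assoc, mul_assoc,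
    ← zc_add, ← zc_add, smul_smul, ← zpow_add₀ hq0]
  rw [show (m:ℤ) + n + -1 * (m:ℤ) = n by ring, show (-1 : ℤ) + (n + 1) = n by ring]

end Sigma

section Theta
variable (σ : Ralg q →ₐ[ℂ] Ralg q) (θ : Ralg q →ₗ[ℂ] Ralg q)
  (hσt : σ (Ralg.t q) = q • Ralg.t q)
  (hLeib : ∀ a b : Ralg q, θ (a * b) = θ a * b + σ a * θ b)
  (hθt : θ (Ralg.t q) = 1)

include hσt hLeib hθt in
lemma θ_tpow (k : ℕ) :
    θ ((Ralg.t q) ^ (k + 1)) = (∑ i ∈ Finset.range (k + 1), q ^ i) • (Ralg.t q) ^ k := by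
  induction k with
  | zero => simp [hθt]
  | succ k ih =>
    rw [pow_succ', hLeib, hθt, one_mul, ih, hσt, smul_mul_assoc, mul_smul_comm,
      smul_smul, ← pow_succ', geom_sum_succ (x := q) (n := k + 1), add_smul, one_smul]
    exact add_comm _ _

end Theta

section Inj
variable (hq0 : q ≠ 0) (hroot : ∀ n : ℕ, 0 < n → q ^ n ≠ 1)

include hq0 hroot in
lemma pow_inj {a b : ℕ} (h : q ^ a = q ^ b) : a = b := by
  rcases lt_trichotomy a b with h' | h' | h'
  · exfalso
    have : q ^ a * q ^ (b - a) = q ^ a * 1 := by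
      rw [mul_one, ← pow_add, show a + (b - a) = b by omega, ← h]
    exact hroot (b - a) (by omega) (mul_left_cancel₀ (pow_ne_zero a hq0) this)
  · exact h'
  · exfalso
    have : q ^ b * q ^ (a - b) = q ^ b * 1 := by
      rw [mul_one, ← pow_add, show b + (a - b) = a by omega, h]
    exact hroot (a - b) (by omega) (mul_left_cancel₀ (pow_ne_zero b hq0) this)

include hq0 hroot in
lemma zpow_inj {a b : ℤ} (h : q ^ a = q ^ b) : a = b := by
  by_contra hne
  have hk : a - b ≠ 0 := sub_ne_zero.mpr hne
  have h2 : q ^ (a - b) = 1 := by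
    rw [zpow_sub₀ hq0, h, div_self (zpow_ne_zero _ hq0)]
  have h3 : q ^ ((a - b).natAbs) = 1 := by
    rcases Int.natAbs_eq (a - b) with he | he
    · rw [← zpow_natCast, ← he, h2]
    · have h4 : q ^ (-(a - b)) = 1 := by rw [zpow_neg, h2, inv_one]
      rw [← zpow_natCast, show (((a - b).natAbs : ℤ)) = -(a - b) by omega, h4]
  exact hroot _ (Int.natAbs_pos.mpr hk) h3

end Inj

lemma sumP {V : Type*} [AddCommMonoid V] (P : V → Prop) (h0 : P 0)
    (hadd : ∀ x y, P x → P y → P (x + y)) {ι : Type*} (s : Finset ι) (u : ι → V)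
    (h : ∀ i ∈ s, P (u i)) : P (∑ i ∈ s, u i) := by
  classical
  induction s using Finset.induction_on with
  | empty => simpa using h0
  | insert j s hj ih =>
    rw [Finset.sum_insert hj]
    exact hadd _ _ (h _ (Finset.mem_insert_self _ _))
      (ih fun i hi => h i (Finset.mem_insert_of_mem hi))

/-- Eigencomponent isolation: if a sum of eigenvectors with pairwise distinct
eigenvalues lies in a `T`-stable submodule-like predicate, so does each term. -/
lemma isolate {V : Type*} [AddCommGroup V] [Module ℂ V] (P : V → Prop) (h0 : P 0)
    (hadd : ∀ x y, P x → P y → P (x + y)) (hsmul : ∀ (c : ℂ) x, P x → P (c • x))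
    (T : V →ₗ[ℂ] V) (hT : ∀ x, P x → P (T x)) {ι : Type*} :
    ∀ (s : Finset ι) (v : ι → V) (lam : ι → ℂ),
      (∀ i ∈ s, T (v i) = lam i • v i) →
      (∀ i ∈ s, ∀ j ∈ s, lam i = lam j → i = j) →
      P (∑ i ∈ s, v i) → ∀ i ∈ s, P (v i) := by
  classical
  intro s
  induction s using Finset.induction_on with
  | empty => intro v lam _ _ _ i hi; exact absurd hi (Finset.notMem_empty i)
  | @insert j s hj ih =>
    intro v lam heig hinj hsum i hi
    have hwj : (lam j - lam j) • v j = 0 := by rw [sub_self, zero_smul]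
    have e1 : ∀ i ∈ insert j s, T (v i) + (-(lam j)) • v i = (lam i - lam j) • v i := by
      intro i hi
      rw [heig i hi, neg_smul, ← sub_eq_add_neg, ← sub_smul]
    have e2 : T (∑ i ∈ insert j s, v i) + (-(lam j)) • (∑ i ∈ insert j s, v i)
        = ∑ i ∈ insert j s, (lam i - lam j) • v i := by
      rw [map_sum, Finset.smul_sum, ← Finset.sum_add_distrib]
      exact Finset.sum_congr rfl e1
    have e3 : ∑ i ∈ insert j s, (lam i - lam j) • v i = ∑ i ∈ s, (lam i - lam j) • v i := by
      rw [Finset.sum_insert hj, hwj, zero_add]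
    have hPs : P (∑ i ∈ s, (lam i - lam j) • v i) := by
      rw [← e3, ← e2]
      exact hadd _ _ (hT _ hsum) (hsmul _ _ hsum)
    have hws : ∀ i ∈ s, P ((lam i - lam j) • v i) := by
      refine ih (fun i => (lam i - lam j) • v i) lam ?_ ?_ hPs
      · intro i hi
        rw [map_smul, heig i (Finset.mem_insert_of_mem hi), smul_smul, smul_smul, mul_comm]
      · intro i hi i' hi' hh
        exact hinj i (Finset.mem_insert_of_mem hi) i' (Finset.mem_insert_of_mem hi') hh
    have hvs : ∀ i ∈ s, P (v i) := by
      intro i hi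
      have hne : lam i - lam j ≠ 0 := by
        refine sub_ne_zero.mpr fun hh => hj ?_
        have h5 := hinj i (Finset.mem_insert_of_mem hi) j (Finset.mem_insert_self j s) hh
        rwa [← h5]
      have h6 : v i = (lam i - lam j)⁻¹ • (lam i - lam j) • v i := by
        rw [smul_smul, inv_mul_cancel₀ hne, one_smul]
      rw [h6]
      exact hsmul _ _ (hws i hi)
    rcases Finset.mem_insert.mp hi with rfl | hi'
    · have h7 : v i = (∑ k ∈ insert i s, v k) + (-1 : ℂ) • ∑ k ∈ s, v k := by
        rw [Finset.sum_insert hj, neg_one_smul]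
        abel
      rw [h7]
      exact hadd _ _ hsum (hsmul _ _ (sumP P h0 hadd s v hvs))
    · exact hvs i hi'

end QsiAux

open QsiAux

/-- Simplicity of the qsi algebra `R = ℂ[t,Q,Q⁻¹]`, `Qt = qtQ`: the only
two-sided ideals stable under `σ` (the algebra endomorphism with `σt = qt`,
`σQ = qQ`) and under the `σ`-twisted derivation `θ` (with `θt = 1`, `θQ = 0`)
are `0` and `R`. -/
theorem Ralg_qsi_simple (q : ℂ) (hq0 : q ≠ 0)
    (hroot : ∀ n : ℕ, 0 < n → q ^ n ≠ 1)
    (σ : Ralg q →ₐ[ℂ] Ralg q)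
    (hσt : σ (Ralg.t q) = q • Ralg.t q)
    (hσQ : σ (Ralg.Q q) = q • Ralg.Q q)
    (θ : Ralg q →ₗ[ℂ] Ralg q)
    (hLeib : ∀ a b : Ralg q, θ (a * b) = θ a * b + σ a * θ b)
    (hθt : θ (Ralg.t q) = 1)
    (hθQ : θ (Ralg.Q q) = 0)
    (I : TwoSidedIdeal (Ralg q))
    (hσI : ∀ x ∈ I, σ x ∈ I)
    (hθI : ∀ x ∈ I, θ x ∈ I) :
    I = ⊥ ∨ I = ⊤ := by
  classical
  by_cases hbot : I = ⊥
  · exact Or.inl hbot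
  right
  -- some nonzero element of I
  have hex : ∃ x, x ∈ I ∧ x ≠ 0 := by
    by_contra hno
    push_neg at hno
    apply hbot
    rw [eq_bot_iff]
    intro x hx
    exact hno x hx
  obtain ⟨x, hxI, hx0⟩ := hex
  -- I is closed under ℂ-scalars
  have hsmulI : ∀ (c : ℂ) (y : Ralg q), y ∈ I → c • y ∈ I := by
    intro c y hy
    rw [Algebra.smul_def]
    exact I.mul_mem_left _ _ hy
  have haddI : ∀ (y z : Ralg q), y ∈ I → z ∈ I → y + z ∈ I := fun y z hy hz =>
    I.add_mem hy hz
  have h0I : (0 : Ralg q) ∈ I := I.zero_mem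
  -- the two stable operators
  have hTI : ∀ y : Ralg q, y ∈ I → Tconj q y ∈ I := fun y hy =>
    I.mul_mem_right _ _ (I.mul_mem_left _ _ hy)
  have hτI : ∀ y : Ralg q, y ∈ I → tauMap q σ y ∈ I := fun y hy =>
    I.mul_mem_right _ _ (I.mul_mem_left _ _ (hσI y hy))
  -- expand x in monomials
  have hxspan : x ∈ Submodule.span ℂ (Set.range fun p : ℕ × ℤ => mon q p.1 p.2) := by
    have := monSpan_top q hq0
    rw [monSpan] at this
    rw [this]
    exact Submodule.mem_top
  rw [Finsupp.mem_span_range_iff_exists_finsupp] at hxspan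
  obtain ⟨c, hc⟩ := hxspan
  have hc' : ∑ p ∈ c.support, c p • mon q p.1 p.2 = x := hc
  -- the support is nonempty
  have hsupp : c.support.Nonempty := by
    rcases Finset.eq_empty_or_nonempty c.support with he | h
    · exact absurd (by rw [← hc', he, Finset.sum_empty]) (Ne.symm hx0)
    · exact h
  obtain ⟨p0, hp0⟩ := hsupp
  have hc0 : c p0 ≠ 0 := Finsupp.mem_support_iff.mp hp0
  -- first isolation : conjugation by Q, eigenvalue q^m
  set s1 : Finset ℕ := c.support.image Prod.fst with hs1
  set v1 : ℕ → Ralg q :=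
    fun m => ∑ p ∈ c.support.filter (fun p => p.1 = m), c p • mon q p.1 p.2 with hv1
  have hx_eq : ∑ m ∈ s1, v1 m = x := by
    rw [← hc', hs1, hv1]
    exact Finset.sum_fiberwise_of_maps_to (fun p hp => Finset.mem_image_of_mem _ hp) _
  have heig1 : ∀ m ∈ s1, Tconj q (v1 m) = (q ^ (m:ℤ)) • v1 m := by
    intro m hm
    rw [hv1, map_sum, Finset.smul_sum]
    refine Finset.sum_congr rfl fun p hp => ?_
    have hpm : p.1 = m := (Finset.mem_filter.mp hp).2
    rw [map_smul, Tconj_mon q hq0, hpm, smul_comm]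
  have hinj1 : ∀ m ∈ s1, ∀ m' ∈ s1, (q ^ (m:ℤ)) = (q ^ (m':ℤ)) → m = m' := by
    intro m _ m' _ h
    exact_mod_cast zpow_inj q hq0 hroot h
  have hfirst : ∀ m ∈ s1, v1 m ∈ I := by
    refine isolate (· ∈ I) h0I haddI hsmulI (Tconj q) hTI s1 v1
      (fun m => q ^ (m:ℤ)) heig1 hinj1 ?_
    rw [hx_eq]; exact hxI
  -- second isolation : tau, eigenvalue q^n
  have hm1 : p0.1 ∈ s1 := Finset.mem_image_of_mem _ hp0
  have hsecond : ∀ p ∈ c.support.filter (fun p => p.1 = p0.1),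
      c p • mon q p.1 p.2 ∈ I := by
    refine isolate (· ∈ I) h0I haddI hsmulI (tauMap q σ) hτI _
      (fun p : ℕ × ℤ => c p • mon q p.1 p.2) (fun p => q ^ p.2) ?_ ?_ (hfirst _ hm1)
    · intro p _
      rw [map_smul, tauMap_mon q σ hq0 hσt hσQ, smul_comm]
    · intro p hp p' hp' h
      have h2 : p.2 = p'.2 := zpow_inj q hq0 hroot h
      have h1 : p.1 = p'.1 := by
        rw [(Finset.mem_filter.mp hp).2, (Finset.mem_filter.mp hp').2]
      exact Prod.ext h1 h2
  have hmem : c p0 • mon q p0.1 p0.2 ∈ I :=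
    hsecond p0 (Finset.mem_filter.mpr ⟨hp0, rfl⟩)
  -- extract t ^ p0.1
  have ht : (Ralg.t q) ^ p0.1 ∈ I := by
    have h1 : (c p0 • mon q p0.1 p0.2) * zc q (-p0.2) ∈ I := I.mul_mem_right _ _ hmem
    have h2 : (c p0 • mon q p0.1 p0.2) * zc q (-p0.2) = c p0 • (Ralg.t q) ^ p0.1 := by
      rw [smul_mul_assoc, mon, mul_assoc, ← zc_add, add_neg_cancel, zc_zero, mul_one]
    have h3 := hsmulI (c p0)⁻¹ _ h1
    rw [h2, smul_smul, inv_mul_cancel₀ hc0, one_smul] at h3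
    exact h3
  -- descend using θ
  have hdesc : ∀ k : ℕ, (Ralg.t q) ^ k ∈ I → (1 : Ralg q) ∈ I := by
    intro k
    induction k with
    | zero => intro h; simpa using h
    | succ k ih =>
      intro h
      have hθ := hθI _ h
      rw [θ_tpow q σ θ hσt hLeib hθt k] at hθ
      set g := ∑ i ∈ Finset.range (k + 1), q ^ i with hg
      have hgne : g ≠ 0 := by
        intro hg0
        have hgs := geom_sum_mul q (k + 1)
        rw [← hg, hg0, zero_mul] at hgs
        exact hroot (k + 1) (Nat.succ_pos k) (sub_eq_zero.mp hgs.symm)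
      have h4 := hsmulI g⁻¹ _ hθ
      rw [smul_smul, inv_mul_cancel₀ hgne, one_smul] at h4
      exact ih h4
  have hone : (1 : Ralg q) ∈ I := hdesc _ ht
  rw [eq_top_iff]
  intro y _
  simpa using I.mul_mem_left y 1 hone
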